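/- Let d ≤ n be positive integers and let φ(x) = x^⊤ Q x for Q ∈ ℝ^{n×n} be symmetric with respect to the variables x_1,…,x_d (i.e., with a_{i,j} := Q_{i,j} + Q_{j,i} for i ≠ j and a_{i,i} := Q_{i,i}, one has a_{i,i} = a_{j,j} and a_{i,k} = a_{j,k} for all 1 ≤ i, j ≤ d and k ∉ {i, j}). Then the order G = (V, E) with edge set E = { (i, j) : 1 ≤ i < j ≤ d } is valid with respect to minimization of φ: min { φ(x) : x ∈ {0,1}^n } = min { φ(x) : x ∈ B_n^G }. -/

import Mathlib

open Finset

/-- The set of binary vectors `{0,1}^n`, as real vectors. -/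
def Bset (n : ℕ) : Set (Fin n → ℝ) := {x | ∀ i, x i = 0 ∨ x i = 1}

/-- The subset of `{0,1}^n` ordered by an edge set `E`. -/
def BsetG (n : ℕ) (E : Finset (Fin n × Fin n)) : Set (Fin n → ℝ) :=
  {x | x ∈ Bset n ∧ ∀ e ∈ E, x e.1 = 1 → x e.2 = 1}

/-- Quadratic form `x ⊤ Q x = ∑ i ∑ j Q i j * x i * x j`. -/
def quadForm (n : ℕ) (Q : Matrix (Fin n) (Fin n) ℝ) (x : Fin n → ℝ) : ℝ :=
  ∑ i, ∑ j, Q i j * x i * x j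

/-- Coefficient `a_{i,j}` of `x_i x_j` (or of `x_i` if `i = j`) in `x ⊤ Q x`. -/
def aCoef (n : ℕ) (Q : Matrix (Fin n) (Fin n) ℝ) (i j : Fin n) : ℝ :=
  if i = j then Q i i else Q i j + Q j i

lemma aCoef_symm (n : ℕ) (Q : Matrix (Fin n) (Fin n) ℝ) (i j : Fin n) :
    aCoef n Q i j = aCoef n Q j i := by
  unfold aCoef
  rcases eq_or_ne i j with rfl | h
  · simp
  · rw [if_neg h, if_neg (Ne.symm h)]; ring

lemma two_quad (n : ℕ) (Q : Matrix (Fin n) (Fin n) ℝ) (x : Fin n → ℝ) :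
    (∑ i, ∑ j, aCoef n Q i j * x i * x j) =
      2 * quadForm n Q x - ∑ i, Q i i * x i * x i := by
  have h1 : ∀ i j : Fin n, aCoef n Q i j * x i * x j
      = Q i j * x i * x j + Q j i * x i * x j
        - (if i = j then Q i i * x i * x j else 0) := by
    intro i j
    unfold aCoef
    split_ifs with h
    · subst h; ring
    · ring
  have h2 : (∑ i, ∑ j, Q j i * x i * x j) = quadForm n Q x := by
    rw [Finset.sum_comm]
    unfold quadForm
    refine Finset.sum_congr rfl fun i _ => Finset.sum_congr rfl fun j _ => by ring
  have h3 : ∀ i : Fin n, (∑ j, (if i = j then Q i i * x i * x j else 0))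
      = Q i i * x i * x i := by
    intro i
    simp [Finset.sum_ite_eq]
  calc (∑ i, ∑ j, aCoef n Q i j * x i * x j)
      = ∑ i, ∑ j, (Q i j * x i * x j + Q j i * x i * x j
          - (if i = j then Q i i * x i * x j else 0)) := by
        refine Finset.sum_congr rfl fun i _ => Finset.sum_congr rfl fun j _ => h1 i j
    _ = (∑ i, ∑ j, Q i j * x i * x j) + (∑ i, ∑ j, Q j i * x i * x j)
          - ∑ i, ∑ j, (if i = j then Q i i * x i * x j else 0) := by
        simp [Finset.sum_add_distrib, Finset.sum_sub_distrib]
    _ = 2 * quadForm n Q x - ∑ i, Q i i * x i * x i := by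
        rw [h2]
        have : (∑ i, ∑ j, (if i = j then Q i i * x i * x j else 0))
            = ∑ i, Q i i * x i * x i :=
          Finset.sum_congr rfl fun i _ => h3 i
        rw [this]
        unfold quadForm
        ring

lemma quad_swap (n d : ℕ) (Q : Matrix (Fin n) (Fin n) ℝ)
    (hsymDiag : ∀ i j : Fin n, (i : ℕ) < d → (j : ℕ) < d →
      aCoef n Q i i = aCoef n Q j j)
    (hsymOff : ∀ i j k : Fin n, (i : ℕ) < d → (j : ℕ) < d → k ≠ i → k ≠ j →
      aCoef n Q i k = aCoef n Q j k)
    (p q : Fin n) (hp : (p : ℕ) < d) (hq : (q : ℕ) < d)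
    (x : Fin n → ℝ) :
    quadForm n Q (x ∘ Equiv.swap p q) = quadForm n Q x := by
  set e := Equiv.swap p q with he
  have hdiag : ∀ i, Q (e i) (e i) = Q i i := by
    intro i
    rcases eq_or_ne i p with hip | hip
    · rw [hip]
      have := hsymDiag q p hq hp
      simp only [aCoef, if_pos rfl] at this
      simpa [he, Equiv.swap_apply_left] using this
    · rcases eq_or_ne i q with hiq | hiq
      · rw [hiq]
        have := hsymDiag p q hp hq
        simp only [aCoef, if_pos rfl] at this
        simpa [he, Equiv.swap_apply_right] using this
      · simp [he, Equiv.swap_apply_of_ne_of_ne hip hiq]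
  have haC : ∀ i j, aCoef n Q (e i) (e j) = aCoef n Q i j := by
    intro i j
    rcases eq_or_ne i j with hij | hij
    · rw [hij]
      simp only [aCoef, if_pos rfl]
      exact hdiag j
    · rcases eq_or_ne i p with hip | hip
      · rw [hip] at hij ⊢
        rcases eq_or_ne j q with hjq | hjq
        · rw [hjq] at hij ⊢
          rw [show e p = q from Equiv.swap_apply_left p q,
            show e q = p from Equiv.swap_apply_right p q]
          exact aCoef_symm n Q q p
        · rw [show e p = q from Equiv.swap_apply_left p q,
            show e j = j from Equiv.swap_apply_of_ne_of_ne hij.symm hjq]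
          exact hsymOff q p j hq hp hjq hij.symm
      · rcases eq_or_ne i q with hiq | hiq
        · rw [hiq] at hij ⊢
          rcases eq_or_ne j p with hjp | hjp
          · rw [hjp] at hij ⊢
            rw [show e q = p from Equiv.swap_apply_right p q,
              show e p = q from Equiv.swap_apply_left p q]
            exact aCoef_symm n Q p q
          · rw [show e q = p from Equiv.swap_apply_right p q,
              show e j = j from Equiv.swap_apply_of_ne_of_ne hjp hij.symm]
            exact hsymOff p q j hp hq hjp hij.symm
        · rw [show e i = i from Equiv.swap_apply_of_ne_of_ne hip hiq]
          rcases eq_or_ne j p with hjp | hjp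
          · rw [hjp] at hij ⊢
            rw [show e p = q from Equiv.swap_apply_left p q]
            calc aCoef n Q i q = aCoef n Q q i := aCoef_symm n Q i q
              _ = aCoef n Q p i := hsymOff q p i hq hp hiq hip
              _ = aCoef n Q i p := aCoef_symm n Q p i
          · rcases eq_or_ne j q with hjq | hjq
            · rw [hjq] at hij ⊢
              rw [show e q = p from Equiv.swap_apply_right p q]
              calc aCoef n Q i p = aCoef n Q p i := aCoef_symm n Q i p
                _ = aCoef n Q q i := hsymOff p q i hp hq hip hiq
                _ = aCoef n Q i q := aCoef_symm n Q q i
            · rw [show e j = j from Equiv.swap_apply_of_ne_of_ne hjp hjq]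
  have hg : (∑ i, ∑ j, aCoef n Q i j * x (e i) * x (e j))
      = ∑ i, ∑ j, aCoef n Q i j * x i * x j := by
    refine Fintype.sum_equiv e _ _ fun i => ?_
    refine Fintype.sum_equiv e _ _ fun j => ?_
    rw [haC i j]
  have hD : (∑ i, Q i i * x (e i) * x (e i)) = ∑ i, Q i i * x i * x i := by
    refine Fintype.sum_equiv e _ _ fun i => ?_
    rw [hdiag i]
  have h1 := two_quad n Q (x ∘ e)
  have h2 := two_quad n Q x
  simp only [Function.comp_apply] at h1
  rw [hg, hD, h2] at h1
  linarith

/-- weighted count of ones -/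
noncomputable def Mval (n : ℕ) (x : Fin n → ℝ) : ℕ :=
  ∑ i : Fin n, if x i = 1 then (i : ℕ) else 0

lemma Mval_le (n : ℕ) (x : Fin n → ℝ) : Mval n x ≤ ∑ i : Fin n, (i : ℕ) := by
  refine Finset.sum_le_sum fun i _ => ?_
  split_ifs <;> simp

lemma Mval_swap (n : ℕ) (x : Fin n → ℝ) (p q : Fin n) (hpq : p ≠ q)
    (hxp : x p = 1) (hxq : x q = 0) :
    Mval n (x ∘ Equiv.swap p q) + (p : ℕ) = Mval n x + (q : ℕ) := by
  set e := Equiv.swap p q with he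
  have hM : Mval n (x ∘ e) = ∑ j : Fin n, if x j = 1 then ((e j : Fin n) : ℕ) else 0 := by
    unfold Mval
    refine Fintype.sum_equiv e _ _ fun i => ?_
    simp [he, Equiv.swap_apply_self]
  rw [hM]
  set A : Fin n → ℕ := fun j => if x j = 1 then ((e j : Fin n) : ℕ) else 0 with hA
  set B : Fin n → ℕ := fun j => if x j = 1 then (j : ℕ) else 0 with hB
  have hAB : ∀ j, j ≠ p → A j = B j := by
    intro j hj
    rcases eq_or_ne j q with rfl | h
    · simp [hA, hB, hxq]
    · simp [hA, hB, he, Equiv.swap_apply_of_ne_of_ne hj h]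
  have hAp : A p = (q : ℕ) := by simp [hA, hxp, he, Equiv.swap_apply_left]
  have hBp : B p = (p : ℕ) := by simp [hB, hxp]
  have h1 : ∑ j, A j = A p + ∑ j ∈ Finset.univ.erase p, A j :=
    (Finset.add_sum_erase _ A (Finset.mem_univ p)).symm
  have h2 : (Mval n x) = B p + ∑ j ∈ Finset.univ.erase p, B j :=
    (Finset.add_sum_erase _ B (Finset.mem_univ p)).symm
  have h3 : ∑ j ∈ Finset.univ.erase p, A j = ∑ j ∈ Finset.univ.erase p, B j :=
    Finset.sum_congr rfl fun j hj => hAB j (Finset.mem_erase.1 hj).1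
  rw [h1, h2, h3, hAp, hBp]
  omega

theorem stmt9 (n d : ℕ) (hd : 0 < d) (hdn : d ≤ n)
    (Q : Matrix (Fin n) (Fin n) ℝ)
    (hsymDiag : ∀ i j : Fin n, (i : ℕ) < d → (j : ℕ) < d →
      aCoef n Q i i = aCoef n Q j j)
    (hsymOff : ∀ i j k : Fin n, (i : ℕ) < d → (j : ℕ) < d → k ≠ i → k ≠ j →
      aCoef n Q i k = aCoef n Q j k) :
    sInf (quadForm n Q '' Bset n) =
      sInf (quadForm n Q ''
        BsetG n (univ.filter (fun p : Fin n × Fin n =>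
          (p.1 : ℕ) < d ∧ (p.2 : ℕ) < d ∧ p.1 < p.2))) := by
  set E := univ.filter (fun p : Fin n × Fin n =>
    (p.1 : ℕ) < d ∧ (p.2 : ℕ) < d ∧ p.1 < p.2) with hE
  set T := ∑ i : Fin n, (i : ℕ) with hT
  have key : ∀ (m : ℕ) (x : Fin n → ℝ), x ∈ Bset n → T - Mval n x ≤ m →
      ∃ y ∈ BsetG n E, quadForm n Q y = quadForm n Q x := by
    intro m
    induction m using Nat.strong_induction_on with
    | _ m ih =>
      intro x hx hm
      by_cases hxG : x ∈ BsetG n E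
      · exact ⟨x, hxG, rfl⟩
      · have hnot : ¬ ∀ ep ∈ E, x ep.1 = 1 → x ep.2 = 1 := by
          intro hall
          exact hxG ⟨hx, hall⟩
        push_neg at hnot
        obtain ⟨ep, hepE, hep1, hep2⟩ := hnot
        set p := ep.1 with hpdef
        set q := ep.2 with hqdef
        rw [hE, Finset.mem_filter] at hepE
        obtain ⟨-, hp, hq, hpq⟩ := hepE
        have hxq : x q = 0 := (hx q).resolve_right hep2
        have hpqne : p ≠ q := ne_of_lt hpq
        set x' := x ∘ Equiv.swap p q with hx'def
        have hx' : x' ∈ Bset n := fun i => hx _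
        have hquad : quadForm n Q x' = quadForm n Q x :=
          quad_swap n d Q hsymDiag hsymOff p q hp hq x
        have hMswap : Mval n x' + (p : ℕ) = Mval n x + (q : ℕ) :=
          Mval_swap n x p q hpqne hep1 hxq
        have hple : (p : ℕ) < (q : ℕ) := hpq
        have hle1 : Mval n x' ≤ T := Mval_le n x'
        have hlt : T - Mval n x' < m := by omega
        obtain ⟨y, hy, hqy⟩ := ih (T - Mval n x') hlt x' hx' le_rfl
        exact ⟨y, hy, hqy.trans hquad⟩
  have hset : quadForm n Q '' Bset n = quadForm n Q '' BsetG n E := by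
    apply Set.Subset.antisymm
    · rintro v ⟨x, hx, rfl⟩
      obtain ⟨y, hy, hqy⟩ := key (T - Mval n x) x hx le_rfl
      exact ⟨y, hy, hqy⟩
    · exact Set.image_mono fun x hx => hx.1
  rw [hset]
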